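/- For every bounded measurable f : X → ℝ, |∫_X f dμ| ≤ ‖f‖_{□^V}. -/

import Mathlib

open MeasureTheory

/-- The Gowers box integral `∫_{X⁺} ∏_{ω ∈ {0,1}^V} f(x^ω) dμ⁺`. -/
noncomputable def boxInt {V : Type} [Fintype V] [DecidableEq V]
    (X : V → Type) [∀ v, MeasurableSpace (X v)] (μ : ∀ v, Measure (X v))
    (f : (∀ v, X v) → ℝ) : ℝ :=
  ∫ x : ∀ p : V × Bool, X p.1,
    ∏ ω : V → Bool, f (fun v => x (v, ω v))
    ∂(Measure.pi fun p : V × Bool => μ p.1)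

/-- The Gowers box seminorm `‖f‖_{□^V} = (boxInt f)^{1/2^{|V|}}`. -/
noncomputable def boxNorm {V : Type} [Fintype V] [DecidableEq V]
    (X : V → Type) [∀ v, MeasurableSpace (X v)] (μ : ∀ v, Measure (X v))
    (f : (∀ v, X v) → ℝ) : ℝ :=
  (boxInt X μ f) ^ ((1 : ℝ) / 2 ^ Fintype.card V)

section Split

variable {ι : Type} [DecidableEq ι] {α : ι → Type} [∀ i, MeasurableSpace (α i)]

/-- Insert a value at coordinate `j`. -/
def insCoord (j : ι) (a : α j) (y : ∀ i : {x : ι // ¬ x = j}, α i) : ∀ i, α i :=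
  fun i => if h : i = j then h.symm ▸ a else y ⟨i, h⟩

instance uniqueEqSubtype (j : ι) : Unique {x : ι // x = j} :=
  ⟨⟨⟨j, rfl⟩⟩, fun i => Subtype.ext i.2⟩

lemma insCoord_same (j : ι) (a : α j) (y : ∀ i : {x : ι // ¬ x = j}, α i) :
    insCoord j a y j = a := by
  simp [insCoord]

lemma insCoord_ne (j : ι) (a : α j) (y : ∀ i : {x : ι // ¬ x = j}, α i)
    (i : ι) (h : ¬ i = j) : insCoord j a y i = y ⟨i, h⟩ := by
  simp [insCoord, h]

lemma measurable_insCoord (j : ι) :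
    Measurable (fun p : (α j) × (∀ i : {x : ι // ¬ x = j}, α i) => insCoord j p.1 p.2) := by
  apply measurable_pi_lambda
  intro i
  by_cases h : i = j
  · subst h
    simpa [insCoord] using measurable_fst
  · simp only [insCoord, dif_neg h]
    exact (measurable_pi_apply _).comp measurable_snd

theorem integral_split [Fintype ι] (m : ∀ i, Measure (α i)) [∀ i, IsProbabilityMeasure (m i)]
    (j : ι) (φ : (∀ i, α i) → ℝ) (hφ : Measurable φ) (C : ℝ) (hb : ∀ x, |φ x| ≤ C) :
    ∫ x, φ x ∂(Measure.pi m)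
      = ∫ y : ∀ i : {x : ι // ¬ x = j}, α i, (∫ a : α j, φ (insCoord j a y) ∂(m j))
          ∂(Measure.pi fun i : {x : ι // ¬ x = j} => m i) := by
  set e := MeasurableEquiv.piEquivPiSubtypeProd α (fun x : ι => x = j) with he
  have hpres := measurePreserving_piEquivPiSubtypeProd m (fun x : ι => x = j)
  have h1 := hpres.integral_comp e.measurableEmbedding (fun z => φ (e.symm z))
  simp only [he, MeasurableEquiv.symm_apply_apply] at h1
  have hφint : Integrable φ (Measure.pi m) := by
    refine (integrable_const C).mono' hφ.aestronglyMeasurable ?_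
    exact Filter.Eventually.of_forall fun z => by simpa using hb _
  have hint := ((MeasurePreserving.symm e hpres).integrable_comp_emb
    e.symm.measurableEmbedding).mpr hφint
  have h4 := integral_prod _ hint
  have h5 := integral_integral_swap (f := fun u y => (φ ∘ e.symm) (u, y)) (by exact hint)
  refine h1.trans ((h4.trans h5).trans ?_)
  have hmp2 := measurePreserving_piUnique (fun i : {x : ι // x = j} => m i)
  have h2 : ∀ (g : α j → ℝ),
      (∫ u : ∀ i : {x : ι // x = j}, α i, g (u ⟨j, rfl⟩)
        ∂(Measure.pi fun i : {x : ι // x = j} => m i)) = ∫ a, g a ∂(m j) := by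
    intro g
    exact hmp2.integral_comp (MeasurableEquiv.piUnique
      (fun i : {x : ι // x = j} => α i)).measurableEmbedding g
  have h3 : ∀ (y : ∀ i : {x : ι // ¬ x = j}, α i) (u : ∀ i : {x : ι // x = j}, α i),
      φ (e.symm (u, y)) = φ (insCoord j (u ⟨j, rfl⟩) y) := by
    intro y u
    congr 1
    funext i
    by_cases h : i = j
    · subst h
      simp [e, insCoord, MeasurableEquiv.piEquivPiSubtypeProd,
        Equiv.piEquivPiSubtypeProd]
    · simp [e, insCoord, h, MeasurableEquiv.piEquivPiSubtypeProd,
        Equiv.piEquivPiSubtypeProd]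
  congr! 1
  funext y
  refine Eq.trans ?_ (h2 (fun a => φ (insCoord j a y)))
  congr! 1
  · congr!
  · funext u
    exact h3 y u

end Split

/-- Cauchy-Schwarz: for a probability measure, `(∫ H)² ≤ ∫ H·H`. -/
lemma cs_int {Y : Type*} [MeasurableSpace Y] {ν : Measure Y} [IsProbabilityMeasure ν]
    {H : Y → ℝ} (hm : AEStronglyMeasurable H ν) {B : ℝ} (hb : ∀ y, |H y| ≤ B) :
    (∫ y, H y ∂ν) ^ 2 ≤ ∫ y, H y * H y ∂ν := by
  have hint : Integrable H ν :=
    (integrable_const B).mono' hm (Filter.Eventually.of_forall fun y => by simpa using hb y)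
  have hint2 : Integrable (fun y => H y * H y) ν := by
    refine (integrable_const (B * B)).mono' (hm.mul hm) (Filter.Eventually.of_forall fun y => ?_)
    have h0 : |H y| ≤ B := hb y
    calc ‖H y * H y‖ = |H y| * |H y| := by rw [Real.norm_eq_abs, abs_mul]
      _ ≤ B * B := mul_le_mul h0 h0 (abs_nonneg _) ((abs_nonneg _).trans h0)
  set c := ∫ x, H x ∂ν with hc
  have h0 : (0:ℝ) ≤ ∫ y, (H y - c) * (H y - c) ∂ν :=
    integral_nonneg fun y => mul_self_nonneg _
  have e1 : ∫ y, (H y - c) * (H y - c) ∂ν = ∫ y, H y * H y ∂ν - 2 * c * c + c * c := by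
    have i2 : Integrable (fun y => 2 * c * H y) ν := hint.const_mul _
    calc ∫ y, (H y - c) * (H y - c) ∂ν
        = ∫ y, (H y * H y - 2 * c * H y + c * c) ∂ν :=
          integral_congr_ae (Filter.Eventually.of_forall fun y => by ring)
      _ = ∫ y, (H y * H y - 2 * c * H y) ∂ν + ∫ _, c * c ∂ν :=
          integral_add (hint2.sub i2) (integrable_const _)
      _ = (∫ y, H y * H y ∂ν - ∫ y, 2 * c * H y ∂ν) + c * c := by
          rw [integral_sub hint2 i2, integral_const]; simp
      _ = ∫ y, H y * H y ∂ν - 2 * c * c + c * c := by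
          rw [integral_const_mul, ← hc]
  rw [pow_two]
  nlinarith [h0, e1]

noncomputable section Main

variable {V : Type} [Fintype V] [DecidableEq V]
  (X : V → Type) [∀ v, MeasurableSpace (X v)] (μ : ∀ v, Measure (X v))

/-- The set of cube vertices supported on `s`. -/
def boxSet (s : Finset V) : Finset (V → Bool) :=
  Finset.univ.filter (fun ω => ∀ w ∉ s, ω w = false)

lemma mem_boxSet {s : Finset V} {ω : V → Bool} :
    ω ∈ boxSet s ↔ ∀ w ∉ s, ω w = false := by
  simp [boxSet]

/-- Partial box product. -/
def Fbox (f : (∀ v, X v) → ℝ) (s : Finset V) (x : ∀ p : V × Bool, X p.1) : ℝ :=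
  ∏ ω ∈ boxSet s, f (fun w => x (w, ω w))

/-- Partial box integral. -/
def Ibox (f : (∀ v, X v) → ℝ) (s : Finset V) : ℝ :=
  ∫ x : ∀ p : V × Bool, X p.1, Fbox X f s x ∂(Measure.pi fun p : V × Bool => μ p.1)

variable {f : (∀ v, X v) → ℝ}

lemma measurable_Fbox (hf : Measurable f) (s : Finset V) : Measurable (Fbox X f s) := by
  apply Finset.measurable_prod
  intro ω _
  exact hf.comp (measurable_pi_lambda _ fun w => measurable_pi_apply (w, ω w))

lemma abs_Fbox_le {C : ℝ} (hC : ∀ x, |f x| ≤ C) (s : Finset V) (x : ∀ p : V × Bool, X p.1) :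
    |Fbox X f s x| ≤ (max C 1) ^ (2 ^ Fintype.card V) := by
  have h1 : |Fbox X f s x| ≤ (max C 1) ^ (boxSet s).card := by
    rw [Fbox, Finset.abs_prod]
    calc ∏ ω ∈ boxSet s, |f (fun w => x (w, ω w))|
        ≤ ∏ _ω ∈ boxSet s, max C 1 :=
          Finset.prod_le_prod (fun _ _ => abs_nonneg _)
            (fun ω _ => (hC _).trans (le_max_left _ _))
      _ = (max C 1) ^ (boxSet s).card := Finset.prod_const _
  refine h1.trans (pow_le_pow_right₀ (le_max_right C 1) ?_)
  calc (boxSet s).card ≤ (Finset.univ : Finset (V → Bool)).card :=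
        Finset.card_filter_le _ _
    _ = 2 ^ Fintype.card V := by
        simp [Finset.card_univ, Fintype.card_fun]

lemma Fbox_update_true {s : Finset V} {v : V} (hv : v ∉ s) (x : ∀ p : V × Bool, X p.1)
    (b : X v) :
    Fbox X f s (Function.update x ((v, true) : V × Bool) b) = Fbox X f s x := by
  refine Finset.prod_congr rfl fun ω hω => ?_
  have hωv : ω v = false := (mem_boxSet.mp hω) v hv
  congr 1
  funext w
  have hw : ((w, ω w) : V × Bool) ≠ (v, true) := by
    intro hEq
    have h1 : w = v := congrArg Prod.fst hEq
    have h2 : ω w = true := congrArg Prod.snd hEq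
    rw [h1, hωv] at h2
    exact Bool.false_ne_true h2
  rw [Function.update_of_ne hw]

lemma Fbox_insert {s : Finset V} {v : V} (hv : v ∉ s) (x : ∀ p : V × Bool, X p.1) :
    Fbox X f (insert v s) x
      = Fbox X f s x
        * Fbox X f s (Function.update x ((v, false) : V × Bool) (x (v, true))) := by
  classical
  have hsplit : boxSet (insert v s)
      = boxSet s ∪ (boxSet s).image (fun ω => Function.update ω v true) := by
    ext ω
    simp only [mem_boxSet, Finset.mem_union, Finset.mem_image]
    constructor
    · intro h
      by_cases hω : ω v = true
      · right
        refine ⟨Function.update ω v false, ?_, ?_⟩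
        · intro w hw
          by_cases hwv : w = v
          · subst hwv; simp [Function.update]
          · rw [Function.update_of_ne hwv]
            exact h w (by simp [hwv, hw])
        · funext w
          by_cases hwv : w = v
          · subst hwv; simp [Function.update, hω.symm]
          · simp [Function.update, hwv]
      · left
        intro w hw
        by_cases hwv : w = v
        · subst hwv; exact Bool.eq_false_iff.mpr hω
        · exact h w (by simp [hwv, hw])
    · intro h
      rcases h with h | ⟨ω', hω', rfl⟩
      · intro w hw
        exact h w (fun hws => hw (Finset.mem_insert_of_mem hws))
      · intro w hw
        have hwv : w ≠ v := fun hEq => hw (hEq ▸ Finset.mem_insert_self v s)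
        rw [Function.update_of_ne hwv]
        exact hω' w (fun hws => hw (Finset.mem_insert_of_mem hws))
  have hdisj : Disjoint (boxSet s) ((boxSet s).image (fun ω => Function.update ω v true)) := by
    rw [Finset.disjoint_left]
    intro ω hω hω'
    have h1 : ω v = false := (mem_boxSet.mp hω) v hv
    rcases Finset.mem_image.mp hω' with ⟨ω'', _, rfl⟩
    simp [Function.update] at h1
  have hinj : ∀ ω ∈ boxSet s, ∀ ω' ∈ boxSet s,
      Function.update ω v true = Function.update ω' v true → ω = ω' := by
    intro ω hω ω' hω' hEq
    funext w
    by_cases hwv : w = v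
    · subst hwv
      rw [(mem_boxSet.mp hω) w hv, (mem_boxSet.mp hω') w hv]
    · have := congrFun hEq w
      rwa [Function.update_of_ne hwv, Function.update_of_ne hwv] at this
  rw [Fbox, hsplit, Finset.prod_union hdisj, Finset.prod_image hinj]
  congr 1
  refine Finset.prod_congr rfl fun ω hω => ?_
  have hωv : ω v = false := (mem_boxSet.mp hω) v hv
  congr 1
  funext w
  by_cases hwv : w = v
  · subst hwv
    rw [Function.update_self, hωv, Function.update_self]
  · rw [Function.update_of_ne hwv, Function.update_of_ne
      (show ((w, ω w) : V × Bool) ≠ (v, false) from fun hEq => hwv (congrArg Prod.fst hEq))]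

/-- Index type: pairs other than `(v, true)`. -/
abbrev Ix1 (v : V) : Type := {p : V × Bool // ¬ p = (v, true)}

/-- `(v, false)` as an element of `Ix1 v`. -/
def jx1 (v : V) : Ix1 v := ⟨(v, false), fun h => Bool.false_ne_true (congrArg Prod.snd h)⟩

/-- Index type: pairs other than `(v, true)` and `(v, false)`. -/
abbrev Ix2 (v : V) : Type := {q : Ix1 v // ¬ q = jx1 v}

/-- Reassemble a point of the doubled space from values at `(v,false)`, `(v,true)` and the rest. -/
def rbuild (v : V) (z : ∀ q : Ix2 v, X q.1.1.1) (a b : X v) : ∀ p : V × Bool, X p.1 :=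
  insCoord (α := fun p : V × Bool => X p.1) ((v, true) : V × Bool) b
    (insCoord (α := fun q : Ix1 v => X q.1.1) (jx1 v) a z)

lemma rbuild_true (v : V) (z : ∀ q : Ix2 v, X q.1.1.1) (a b : X v) :
    rbuild X v z a b (v, true) = b :=
  insCoord_same _ _ _

lemma rbuild_false (v : V) (z : ∀ q : Ix2 v, X q.1.1.1) (a b : X v) :
    rbuild X v z a b (v, false) = a := by
  have h : ¬ ((v, false) : V × Bool) = (v, true) :=
    fun h => Bool.false_ne_true (congrArg Prod.snd h)
  calc rbuild X v z a b (v, false)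
      = (insCoord (α := fun q : Ix1 v => X q.1.1) (jx1 v) a z) ⟨(v, false), h⟩ :=
        insCoord_ne _ _ _ _ h
    _ = a := insCoord_same _ _ _

lemma rbuild_other (v : V) (z : ∀ q : Ix2 v, X q.1.1.1) (a b : X v) (p : V × Bool)
    (h1 : ¬ p = (v, true)) (h2 : ¬ p = (v, false)) :
    rbuild X v z a b p = z ⟨⟨p, h1⟩, fun hEq => h2 (congrArg Subtype.val hEq)⟩ := by
  calc rbuild X v z a b p
      = (insCoord (α := fun q : Ix1 v => X q.1.1) (jx1 v) a z) ⟨p, h1⟩ :=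
        insCoord_ne _ _ _ _ h1
    _ = z ⟨⟨p, h1⟩, fun hEq => h2 (congrArg Subtype.val hEq)⟩ :=
        insCoord_ne _ _ _ _ (fun hEq => h2 (congrArg Subtype.val hEq))

lemma rbuild_update_false (v : V) (z : ∀ q : Ix2 v, X q.1.1.1) (a b c : X v) :
    Function.update (rbuild X v z a b) ((v, false) : V × Bool) c = rbuild X v z c b := by
  funext p
  by_cases h1 : p = (v, true)
  · subst h1
    rw [Function.update_of_ne (fun h => Bool.false_ne_true (congrArg Prod.snd h).symm),
      rbuild_true, rbuild_true]
  · by_cases h2 : p = (v, false)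
    · subst h2
      rw [Function.update_self, rbuild_false]
    · rw [Function.update_of_ne h2, rbuild_other X v z a b p h1 h2,
        rbuild_other X v z c b p h1 h2]

lemma rbuild_update_true (v : V) (z : ∀ q : Ix2 v, X q.1.1.1) (a b c : X v) :
    Function.update (rbuild X v z a b) ((v, true) : V × Bool) c = rbuild X v z a c := by
  funext p
  by_cases h1 : p = (v, true)
  · subst h1
    rw [Function.update_self, rbuild_true]
  · by_cases h2 : p = (v, false)
    · subst h2
      rw [Function.update_of_ne h1, rbuild_false, rbuild_false]
    · rw [Function.update_of_ne h1, rbuild_other X v z a b p h1 h2,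
        rbuild_other X v z a c p h1 h2]

lemma measurable_rbuild (v : V) :
    Measurable (fun t : (∀ q : Ix2 v, X q.1.1.1) × X v × X v => rbuild X v t.1 t.2.1 t.2.2) := by
  have hinner : Measurable (fun t : (∀ q : Ix2 v, X q.1.1.1) × X v × X v =>
      insCoord (α := fun q : Ix1 v => X q.1.1) (jx1 v) t.2.1 t.1) :=
    (measurable_insCoord (jx1 v)).comp
      ((measurable_fst.comp measurable_snd).prodMk measurable_fst)
  exact (measurable_insCoord ((v, true) : V × Bool)).comp
    ((measurable_snd.comp measurable_snd).prodMk hinner)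

lemma Fbox_empty (x : ∀ p : V × Bool, X p.1) :
    Fbox X f ∅ x = f (fun v => x (v, false)) := by
  have hset : boxSet (∅ : Finset V) = {fun _ => false} := by
    ext ω
    simp only [mem_boxSet, Finset.mem_singleton]
    constructor
    · intro h; funext w; exact h w (Finset.notMem_empty w)
    · intro h w _; rw [h]
  rw [Fbox, hset, Finset.prod_singleton]

lemma Ibox_empty [∀ v, IsProbabilityMeasure (μ v)] (hfm : Measurable f) :
    Ibox X μ f ∅ = ∫ x, f x ∂(Measure.pi μ) := by
  have hΦm : Measurable (fun (x : ∀ p : V × Bool, X p.1) v => x (v, false)) :=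
    measurable_pi_lambda _ fun v => measurable_pi_apply _
  have hmap : Measure.map (fun (x : ∀ p : V × Bool, X p.1) v => x (v, false))
      (Measure.pi fun p : V × Bool => μ p.1) = Measure.pi μ := by
    refine (Measure.pi_eq fun s hs => ?_).symm
    rw [Measure.map_apply hΦm (MeasurableSet.univ_pi hs)]
    have hpre : (fun (x : ∀ p : V × Bool, X p.1) v => x (v, false)) ⁻¹' (Set.univ.pi s)
        = Set.univ.pi (fun p : V × Bool => if p.2 = false then s p.1 else Set.univ) := by
      ext x
      simp only [Set.mem_preimage, Set.mem_univ_pi]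
      constructor
      · rintro h ⟨w, b⟩
        cases b
        · simpa using h w
        · simp
      · intro h w
        simpa using h (w, false)
    rw [hpre, Measure.pi_pi]
    rw [Fintype.prod_prod_type]
    refine Finset.prod_congr rfl fun v _ => ?_
    rw [Fintype.prod_bool]
    simp
  calc Ibox X μ f ∅
      = ∫ x, f (fun v => x (v, false)) ∂(Measure.pi fun p : V × Bool => μ p.1) :=
        integral_congr_ae (Filter.Eventually.of_forall fun x => Fbox_empty X x)
    _ = ∫ y, f y ∂(Measure.map (fun (x : ∀ p : V × Bool, X p.1) v => x (v, false))
          (Measure.pi fun p : V × Bool => μ p.1)) :=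
        (integral_map hΦm.aemeasurable hfm.aestronglyMeasurable).symm
    _ = ∫ y, f y ∂(Measure.pi μ) := by rw [hmap]

/-- The doubled integrand. -/
def phiF (f : (∀ v, X v) → ℝ) (s : Finset V) (v : V) (x : ∀ p : V × Bool, X p.1) : ℝ :=
  Fbox X f s x * Fbox X f s (Function.update x ((v, false) : V × Bool) (x (v, true)))

/-- The section function. -/
def chiF (f : (∀ v, X v) → ℝ) (s : Finset V) (v : V)
    (t : (∀ q : Ix2 v, X q.1.1.1) × X v) : ℝ :=
  Fbox X f s (rbuild X v t.1 t.2 t.2)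

/-- Conditional integral of the section function. -/
def HF (f : (∀ v, X v) → ℝ) (s : Finset V) (v : V) (z : ∀ q : Ix2 v, X q.1.1.1) : ℝ :=
  ∫ a, chiF X f s v (z, a) ∂(μ v)

/-- Inner integral of the doubled integrand. -/
def psiF (f : (∀ v, X v) → ℝ) (s : Finset V) (v : V) (y : ∀ i : Ix1 v, X i.1.1) : ℝ :=
  ∫ b, phiF X f s v (insCoord (α := fun p : V × Bool => X p.1) ((v, true) : V × Bool) b y) ∂(μ v)

/-- Inner integral of the plain integrand. -/
def psi0F (f : (∀ v, X v) → ℝ) (s : Finset V) (v : V) (y : ∀ i : Ix1 v, X i.1.1) : ℝ :=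
  ∫ b, Fbox X f s (insCoord (α := fun p : V × Bool => X p.1) ((v, true) : V × Bool) b y) ∂(μ v)

lemma Fbox_rbuild {s : Finset V} {v : V} (hv : v ∉ s)
    (z : ∀ q : Ix2 v, X q.1.1.1) (a b : X v) :
    Fbox X f s (rbuild X v z a b) = chiF X f s v (z, a) := by
  unfold chiF
  conv_rhs => rw [← rbuild_update_true X v z a b a, Fbox_update_true X hv]

lemma phi_rbuild {s : Finset V} {v : V} (hv : v ∉ s)
    (z : ∀ q : Ix2 v, X q.1.1.1) (a b : X v) :
    phiF X f s v (rbuild X v z a b) = chiF X f s v (z, a) * chiF X f s v (z, b) := by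
  unfold phiF
  rw [rbuild_true, rbuild_update_false, Fbox_rbuild X hv z a b]
  rfl

lemma psi_ins {s : Finset V} {v : V} (hv : v ∉ s)
    (z : ∀ q : Ix2 v, X q.1.1.1) (a : X v) :
    psiF X μ f s v (insCoord (α := fun q : Ix1 v => X q.1.1) (jx1 v) a z)
      = chiF X f s v (z, a) * HF X μ f s v z := by
  unfold psiF
  calc (∫ b, phiF X f s v (insCoord (α := fun p : V × Bool => X p.1) ((v, true) : V × Bool) b
          (insCoord (α := fun q : Ix1 v => X q.1.1) (jx1 v) a z)) ∂(μ v))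
      = ∫ b, chiF X f s v (z, a) * chiF X f s v (z, b) ∂(μ v) :=
        integral_congr_ae (Filter.Eventually.of_forall fun b => phi_rbuild X hv z a b)
    _ = chiF X f s v (z, a) * ∫ b, chiF X f s v (z, b) ∂(μ v) :=
        integral_const_mul _ _
    _ = chiF X f s v (z, a) * HF X μ f s v z := rfl

lemma psi0_ins [∀ v, IsProbabilityMeasure (μ v)] {s : Finset V} {v : V} (hv : v ∉ s)
    (z : ∀ q : Ix2 v, X q.1.1.1) (a : X v) :
    psi0F X μ f s v (insCoord (α := fun q : Ix1 v => X q.1.1) (jx1 v) a z)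
      = chiF X f s v (z, a) := by
  unfold psi0F
  calc (∫ b, Fbox X f s (insCoord (α := fun p : V × Bool => X p.1) ((v, true) : V × Bool) b
          (insCoord (α := fun q : Ix1 v => X q.1.1) (jx1 v) a z)) ∂(μ v))
      = ∫ _b, chiF X f s v (z, a) ∂(μ v) :=
        integral_congr_ae (Filter.Eventually.of_forall fun b => Fbox_rbuild X hv z a b)
    _ = chiF X f s v (z, a) := by simp

lemma Ibox_step [∀ v, IsProbabilityMeasure (μ v)] (hfm : Measurable f)
    {C : ℝ} (hC : ∀ x, |f x| ≤ C) {s : Finset V} {v : V} (hv : v ∉ s) :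
    (Ibox X μ f s) ^ 2 ≤ Ibox X μ f (insert v s) := by
  classical
  set B := (max C 1) ^ (2 ^ Fintype.card V) with hB
  have hB1 : (1:ℝ) ≤ B := by rw [hB]; exact one_le_pow₀ (le_max_right C 1)
  have hB0 : (0:ℝ) ≤ B := le_trans zero_le_one hB1
  have hFm : Measurable (Fbox X f s) := measurable_Fbox X hfm s
  have hFb : ∀ x, |Fbox X f s x| ≤ B := fun x => abs_Fbox_le X hC s x
  have hUm : Measurable (fun x : ∀ p : V × Bool, X p.1 =>
      Function.update x ((v, false) : V × Bool) (x (v, true))) := by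
    apply measurable_pi_lambda
    intro p
    by_cases h : p = (v, false)
    · subst h
      have hfun : (fun x : ∀ p' : V × Bool, X p'.1 =>
          Function.update x ((v, false) : V × Bool) (x (v, true)) (v, false))
          = fun x => x ((v, true) : V × Bool) := by
        funext x; rw [Function.update_self]
      rw [hfun]; exact measurable_pi_apply _
    · have hfun : (fun x : ∀ p' : V × Bool, X p'.1 =>
          Function.update x ((v, false) : V × Bool) (x (v, true)) p)
          = fun x => x p := by
        funext x; rw [Function.update_of_ne h]
      rw [hfun]; exact measurable_pi_apply p
  have hφm : Measurable (phiF X f s v) := hFm.mul (hFm.comp hUm)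
  have hφb : ∀ x, |phiF X f s v x| ≤ B * B := by
    intro x
    unfold phiF
    rw [abs_mul]
    exact mul_le_mul (hFb _) (hFb _) (abs_nonneg _) hB0
  have hχm : Measurable (chiF X f s v) := hFm.comp ((measurable_rbuild X v).comp
    (measurable_fst.prodMk (measurable_snd.prodMk measurable_snd)))
  have hχb : ∀ t, |chiF X f s v t| ≤ B := fun t => hFb _
  have hHsm : StronglyMeasurable (HF X μ f s v) :=
    hχm.stronglyMeasurable.integral_prod_right'
  have hHb : ∀ z, |HF X μ f s v z| ≤ B := by
    intro z
    have h := norm_integral_le_of_norm_le_const (μ := μ v)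
      (f := fun a => chiF X f s v (z, a)) (C := B)
      (Filter.Eventually.of_forall fun a => by simpa using hχb (z, a))
    simpa [HF] using h
  have hψm : Measurable (psiF X μ f s v) := by
    have hj : Measurable (fun t : (∀ i : Ix1 v, X i.1.1) × X v =>
        phiF X f s v (insCoord (α := fun p : V × Bool => X p.1) ((v, true) : V × Bool) t.2 t.1)) :=
      hφm.comp ((measurable_insCoord _).comp (measurable_snd.prodMk measurable_fst))
    exact hj.stronglyMeasurable.integral_prod_right'.measurable
  have hψb : ∀ y, |psiF X μ f s v y| ≤ B * B := by
    intro y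
    have h := norm_integral_le_of_norm_le_const (μ := μ v)
      (f := fun b => phiF X f s v
        (insCoord (α := fun p : V × Bool => X p.1) ((v, true) : V × Bool) b y)) (C := B * B)
      (Filter.Eventually.of_forall fun b => by simpa using hφb _)
    simpa [psiF] using h
  have hψ0m : Measurable (psi0F X μ f s v) := by
    have hj : Measurable (fun t : (∀ i : Ix1 v, X i.1.1) × X v =>
        Fbox X f s (insCoord (α := fun p : V × Bool => X p.1) ((v, true) : V × Bool) t.2 t.1)) :=
      hFm.comp ((measurable_insCoord _).comp (measurable_snd.prodMk measurable_fst))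
    exact hj.stronglyMeasurable.integral_prod_right'.measurable
  have hψ0b : ∀ y, |psi0F X μ f s v y| ≤ B := by
    intro y
    have h := norm_integral_le_of_norm_le_const (μ := μ v)
      (f := fun b => Fbox X f s
        (insCoord (α := fun p : V × Bool => X p.1) ((v, true) : V × Bool) b y)) (C := B)
      (Filter.Eventually.of_forall fun b => by simpa using hFb _)
    simpa [psi0F] using h
  have E1 : Ibox X μ f (insert v s)
      = ∫ x, phiF X f s v x ∂(Measure.pi fun p : V × Bool => μ p.1) :=
    integral_congr_ae (Filter.Eventually.of_forall fun x => Fbox_insert X hv x)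
  have S1 := integral_split (fun p : V × Bool => μ p.1) ((v, true) : V × Bool)
    (phiF X f s v) hφm (B * B) hφb
  have S2 := integral_split (fun i : Ix1 v => μ i.1.1) (jx1 v)
    (psiF X μ f s v) hψm (B * B) hψb
  have hinner : ∀ z : ∀ q : Ix2 v, X q.1.1.1,
      (∫ a, psiF X μ f s v (insCoord (α := fun q : Ix1 v => X q.1.1) (jx1 v) a z) ∂(μ v))
        = HF X μ f s v z * HF X μ f s v z := by
    intro z
    calc (∫ a, psiF X μ f s v (insCoord (α := fun q : Ix1 v => X q.1.1) (jx1 v) a z) ∂(μ v))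
        = ∫ a, chiF X f s v (z, a) * HF X μ f s v z ∂(μ v) :=
          integral_congr_ae (Filter.Eventually.of_forall fun a => psi_ins X μ hv z a)
      _ = (∫ a, chiF X f s v (z, a) ∂(μ v)) * HF X μ f s v z := integral_mul_const _ _
      _ = HF X μ f s v z * HF X μ f s v z := rfl
  have E2 : Ibox X μ f (insert v s) = _ :=
    ((E1.trans S1).trans S2).trans
      (integral_congr_ae (Filter.Eventually.of_forall hinner))
  have S10 := integral_split (fun p : V × Bool => μ p.1) ((v, true) : V × Bool)
    (Fbox X f s) hFm B hFb
  have S20 := integral_split (fun i : Ix1 v => μ i.1.1) (jx1 v)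
    (psi0F X μ f s v) hψ0m B hψ0b
  have hinner0 : ∀ z : ∀ q : Ix2 v, X q.1.1.1,
      (∫ a, psi0F X μ f s v (insCoord (α := fun q : Ix1 v => X q.1.1) (jx1 v) a z) ∂(μ v))
        = HF X μ f s v z := by
    intro z
    calc (∫ a, psi0F X μ f s v (insCoord (α := fun q : Ix1 v => X q.1.1) (jx1 v) a z) ∂(μ v))
        = ∫ a, chiF X f s v (z, a) ∂(μ v) :=
          integral_congr_ae (Filter.Eventually.of_forall fun a => psi0_ins X μ hv z a)
      _ = HF X μ f s v z := rfl
  have E0 : Ibox X μ f s = _ :=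
    (S10.trans S20).trans (integral_congr_ae (Filter.Eventually.of_forall hinner0))
  rw [E0, E2]
  exact cs_int hHsm.aestronglyMeasurable hHb

lemma Ibox_ge [∀ v, IsProbabilityMeasure (μ v)] (hfm : Measurable f)
    {C : ℝ} (hC : ∀ x, |f x| ≤ C) {s : Finset V} (hs : s.Nonempty) :
    |∫ x, f x ∂(Measure.pi μ)| ^ (2 ^ s.card) ≤ Ibox X μ f s := by
  induction hs using Finset.Nonempty.cons_induction with
  | singleton a =>
      have hstep := Ibox_step X μ hfm hC (Finset.notMem_empty a)
      rw [Ibox_empty X μ hfm] at hstep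
      have h2 : |∫ x, f x ∂(Measure.pi μ)| ^ (2 ^ ({a} : Finset V).card)
          = (∫ x, f x ∂(Measure.pi μ)) ^ 2 := by
        rw [Finset.card_singleton]; norm_num [sq_abs]
      rw [h2]
      simpa using hstep
  | cons a t ha ht ih =>
      have hstep := Ibox_step X μ hfm hC ha
      have hcard : (Finset.cons a t ha).card = t.card + 1 := Finset.card_cons ha
      rw [hcard, Finset.cons_eq_insert]
      calc |∫ x, f x ∂(Measure.pi μ)| ^ (2 ^ (t.card + 1))
          = (|∫ x, f x ∂(Measure.pi μ)| ^ (2 ^ t.card)) ^ 2 := by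
            rw [pow_succ, pow_mul]
        _ ≤ (Ibox X μ f t) ^ 2 := pow_le_pow_left₀ (pow_nonneg (abs_nonneg _) _) ih 2
        _ ≤ Ibox X μ f (insert a t) := hstep

lemma Ibox_univ : Ibox X μ f Finset.univ = boxInt X μ f := by
  have hset : boxSet (Finset.univ : Finset V) = Finset.univ := by
    rw [boxSet]
    exact Finset.filter_true_of_mem (fun ω _ => fun w hw => absurd (Finset.mem_univ w) hw)
  refine integral_congr_ae (Filter.Eventually.of_forall fun x => ?_)
  rw [Fbox, hset]

end Main

/-- For every bounded measurable `f`, `|∫ f dμ| ≤ ‖f‖_{□^V}`. -/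
theorem abs_integral_le_boxNorm (V : Type) [Fintype V] [DecidableEq V] [Nonempty V]
    (X : V → Type) [∀ v, MeasurableSpace (X v)]
    (μ : ∀ v, Measure (X v)) [∀ v, IsProbabilityMeasure (μ v)]
    (f : (∀ v, X v) → ℝ) (hfb : ∃ C, ∀ x, |f x| ≤ C) (hfm : Measurable f) :
    |∫ x, f x ∂(Measure.pi μ)| ≤ boxNorm X μ f := by
  obtain ⟨C, hC⟩ := hfb
  have h := Ibox_ge X μ hfm hC (Finset.univ_nonempty (α := V))
  rw [Ibox_univ X μ, Finset.card_univ] at h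
  have h0 : (0:ℝ) ≤ |∫ x, f x ∂(Measure.pi μ)| := abs_nonneg _
  have key := Real.rpow_le_rpow (pow_nonneg h0 _) h
    (by positivity : (0:ℝ) ≤ 1 / 2 ^ Fintype.card V)
  have heq : ((|∫ x, f x ∂(Measure.pi μ)| ^ (2 ^ Fintype.card V) : ℝ))
      ^ ((1:ℝ) / 2 ^ Fintype.card V) = |∫ x, f x ∂(Measure.pi μ)| := by
    rw [← Real.rpow_natCast |∫ x, f x ∂(Measure.pi μ)| (2 ^ Fintype.card V),
      ← Real.rpow_mul h0]
    have hmul : (((2 : ℕ) ^ Fintype.card V : ℕ) : ℝ) * ((1:ℝ) / 2 ^ Fintype.card V) = 1 := by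
      push_cast
      rw [mul_one_div, div_self (by positivity)]
    rw [hmul, Real.rpow_one]
  rw [boxNorm, ← heq]
  exact key
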